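/- Let K be a field of characteristic zero, V a vector space over K, and L ⊆ V^n a K-linear subspace (the solution set of a finite system of homogeneous K-linear equations). Then there exists a unique maximal ℚ-linear subspace N_L contained in L; that is, N_L is a ℚ-linear subspace of V^n with N_L ⊆ L, and every ℚ-linear subspace of V^n contained in L is contained in N_L. -/

import Mathlib

/-- For a `ℚ`-subspace `U ⊆ ℚ^n`, the `ℚ`-linear subspace
`N_U = {x ∈ V^n : q₁x₁ + ⋯ + qₙxₙ = 0 for every q ∈ U}` of `V^n`, where `V` is a
vector space over a field `K` of characteristic zero (rational coefficients are
interpreted in `K` via the canonical embedding `ℚ → K`). -/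
def ratLinSet (K V : Type*) [Field K] [AddCommGroup V] [Module K V]
    {n : ℕ} (U : Submodule ℚ (Fin n → ℚ)) : Set (Fin n → V) :=
  {x | ∀ q ∈ U, ∑ i, ((q i : K)) • x i = 0}

/-- The standard dot-product bilinear form on `ℚ^n`. -/
def dotForm (n : ℕ) : LinearMap.BilinForm ℚ (Fin n → ℚ) :=
  LinearMap.mk₂ ℚ (fun x y => ∑ i, x i * y i)
    (by intro m m' y; simp [add_mul, Finset.sum_add_distrib])
    (by intro c m y; simp [Finset.mul_sum, mul_assoc])
    (by intro m y y'; simp [mul_add, Finset.sum_add_distrib])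
    (by intro c m y; simp only [smul_eq_mul, Finset.mul_sum]; exact Finset.sum_congr rfl fun i _ => by simp [smul_eq_mul]; ring)

lemma dotForm_apply (n : ℕ) (x y : Fin n → ℚ) : dotForm n x y = ∑ i, x i * y i := rfl

lemma dotForm_symm (n : ℕ) : (dotForm n).IsSymm := by
  refine ⟨fun x y => ?_⟩; simp [dotForm_apply, mul_comm]

lemma dotForm_refl (n : ℕ) : (dotForm n).IsRefl := (dotForm_symm n).isRefl

lemma dotForm_selfeq (n : ℕ) (x : Fin n → ℚ) (h : dotForm n x x = 0) : x = 0 := by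
  have h' : ∑ i, x i * x i = 0 := h
  funext i
  exact mul_self_eq_zero.1
    ((Finset.sum_eq_zero_iff_of_nonneg (fun i _ => mul_self_nonneg (x i))).1 h' i
      (Finset.mem_univ i))

lemma dotForm_nondeg (n : ℕ) : (dotForm n).Nondegenerate := by
  refine ⟨fun x hx => ?_, fun x hx => ?_⟩ <;>
  exact dotForm_selfeq n x (hx x)

lemma dotForm_restrict_nondeg (n : ℕ) (W : Submodule ℚ (Fin n → ℚ)) :
    ((dotForm n).restrict W).Nondegenerate := by
  refine ⟨fun ⟨x, hx⟩ h => ?_, fun ⟨x, hx⟩ h => ?_⟩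
  all_goals
    have := h ⟨x, hx⟩
    simp only [LinearMap.BilinForm.restrict_apply, LinearMap.domRestrict_apply] at this
    exact Subtype.ext (dotForm_selfeq n x this)

/-- Orthogonal decomposition of the standard basis vectors, with symmetric
projection matrix. -/
lemma exists_proj (n : ℕ) (W : Submodule ℚ (Fin n → ℚ)) :
    ∃ c d : Fin n → Fin n → ℚ, (∀ j, c j ∈ W) ∧
      (∀ j, d j ∈ (dotForm n).orthogonal W) ∧
      (∀ j, c j + d j = Pi.single j 1) ∧ (∀ j l, c j l = c l j) := by
  have hcompl : IsCompl W ((dotForm n).orthogonal W) :=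
    (dotForm n).isCompl_orthogonal_of_restrict_nondegenerate (dotForm_refl n)
      (dotForm_restrict_nondeg n W)
  have htop : W ⊔ (dotForm n).orthogonal W = ⊤ := hcompl.sup_eq_top
  have hdec : ∀ j : Fin n, ∃ cj ∈ W, ∃ dj ∈ (dotForm n).orthogonal W,
      cj + dj = Pi.single j 1 := by
    intro j
    have : (Pi.single j 1 : Fin n → ℚ) ∈ W ⊔ (dotForm n).orthogonal W := by
      rw [htop]; trivial
    exact Submodule.mem_sup.1 this
  choose c hc d hd hcd using hdec
  refine ⟨c, d, hc, hd, hcd, ?_⟩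
  -- symmetry
  have key : ∀ j l, c j l = dotForm n (c j) (c l) := by
    intro j l
    have h1 : dotForm n (c j) (Pi.single l 1) = c j l := by
      simp [dotForm_apply, Pi.single_apply, mul_ite]
    have h2 : dotForm n (c j) (d l) = 0 := hd l (c j) (hc j)
    rw [← h1, ← hcd l, map_add, h2, add_zero]
  intro j l
  rw [key j l, key l j]
  simpa using (dotForm_symm n).eq (c j) (c l)

/-- If `x ∈ V^n` is killed by the orthogonal complement of `W`, then `x` is fixed
by a symmetric rational matrix whose rows lie in `W`. -/
lemma key_decomp {K V : Type*} [Field K] [CharZero K] [AddCommGroup V] [Module K V]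
    {n : ℕ} (W : Submodule ℚ (Fin n → ℚ)) (x : Fin n → V)
    (hx : ∀ d ∈ (dotForm n).orthogonal W, ∑ i, ((d i : K)) • x i = 0) :
    ∃ c : Fin n → Fin n → ℚ, (∀ j, c j ∈ W) ∧ (∀ j l, c j l = c l j) ∧
      ∀ j, x j = ∑ l, ((c j l : K)) • x l := by
  obtain ⟨c, d, hc, hd, hcd, hsym⟩ := exists_proj n W
  refine ⟨c, hc, hsym, fun j => ?_⟩
  have h1 : ∑ l, (((Pi.single j 1 : Fin n → ℚ) l : K)) • x l = x j := by
    rw [Finset.sum_eq_single j]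
    · simp
    · intro l _ hl
      simp [Pi.single_apply, hl]
    · simp
  calc x j = ∑ l, (((c j + d j) l : ℚ) : K) • x l := by rw [hcd j]; exact h1.symm
    _ = ∑ l, (((c j l : K)) • x l + ((d j l : K)) • x l) := by
        refine Finset.sum_congr rfl fun l _ => ?_
        simp only [Pi.add_apply]
        rw [Rat.cast_add, add_smul]
    _ = ∑ l, ((c j l : K)) • x l + ∑ l, ((d j l : K)) • x l := Finset.sum_add_distrib
    _ = ∑ l, ((c j l : K)) • x l := by rw [hx (d j) (hd j), add_zero]

lemma sum_smul_rewrite {K V : Type*} [Field K] [CharZero K] [AddCommGroup V] [Module K V]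
    {n : ℕ} (a : Fin n → K) (c : Fin n → Fin n → ℚ) (x : Fin n → V)
    (hx : ∀ j, x j = ∑ l, ((c j l : K)) • x l) :
    ∑ j, a j • x j = ∑ l, (∑ j, a j * (c j l : K)) • x l := by
  calc ∑ j, a j • x j = ∑ j, a j • ∑ l, ((c j l : K)) • x l :=
        Finset.sum_congr rfl fun j _ => by rw [← hx j]
    _ = ∑ j, ∑ l, (a j * (c j l : K)) • x l := by
        refine Finset.sum_congr rfl fun j _ => ?_
        rw [Finset.smul_sum]
        exact Finset.sum_congr rfl fun l _ => smul_smul _ _ _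
    _ = ∑ l, ∑ j, (a j * (c j l : K)) • x l := Finset.sum_comm
    _ = ∑ l, (∑ j, a j * (c j l : K)) • x l :=
        Finset.sum_congr rfl fun l _ => (Finset.sum_smul).symm

/-- Let `K` be a field of characteristic zero, `V` a vector space
over `K`, and `L ⊆ V^n` a `K`-linear subspace (the solution set of a finite system
of homogeneous `K`-linear equations).  Then there exists a unique maximal `ℚ`-linear
subspace `N_L` contained in `L`: it is a `ℚ`-linear subspace of `V^n` contained in
`L`, and every `ℚ`-linear subspace of `V^n` contained in `L` is contained in it. -/
theorem statement3 {K V : Type*} [Field K] [CharZero K] [AddCommGroup V] [Module K V]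
    (n r : ℕ) (k : Fin r → Fin n → K) (L : Set (Fin n → V))
    (hL : L = {x | ∀ i, ∑ j, k i j • x j = 0}) :
    ∃! N : Set (Fin n → V),
      (∃ U : Submodule ℚ (Fin n → ℚ), N = ratLinSet K V U) ∧ N ⊆ L ∧
        ∀ U' : Submodule ℚ (Fin n → ℚ), ratLinSet K V U' ⊆ L → ratLinSet K V U' ⊆ N := by
  classical
  -- the subspace of rational vectors satisfying the `K`-linear equations
  let Z : Submodule ℚ (Fin n → ℚ) :=
    { carrier := {p | ∀ i, ∑ j, k i j * ((p j : K)) = 0}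
      add_mem' := by
        intro a b ha hb i
        have : ∀ j, k i j * (((a + b) j : ℚ) : K)
            = k i j * ((a j : K)) + k i j * ((b j : K)) := by
          intro j
          simp only [Pi.add_apply, Rat.cast_add, mul_add]
        rw [Finset.sum_congr rfl fun j _ => this j, Finset.sum_add_distrib, ha i, hb i,
          add_zero]
      zero_mem' := by intro i; simp
      smul_mem' := by
        intro q a ha i
        have : ∀ j, k i j * (((q • a) j : ℚ) : K) = (q : K) * (k i j * ((a j : K))) := by
          intro j
          simp only [Pi.smul_apply, smul_eq_mul, Rat.cast_mul]
          ring
        rw [Finset.sum_congr rfl fun j _ => this j, ← Finset.mul_sum, ha i, mul_zero] }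
  have hZmem : ∀ p : Fin n → ℚ, p ∈ Z ↔ ∀ i, ∑ j, k i j * ((p j : K)) = 0 := fun p => Iff.rfl
  set U₀ : Submodule ℚ (Fin n → ℚ) := (dotForm n).orthogonal Z with hU₀
  -- membership in `N := ratLinSet K V U₀`
  have hNL : ratLinSet K V U₀ ⊆ L := by
    intro x hx
    rw [hL]
    intro i
    obtain ⟨c, hc, hsym, hdec⟩ := key_decomp (K := K) Z x (fun d hd => hx d hd)
    rw [sum_smul_rewrite (k i) c x hdec]
    have : ∀ l, (∑ j, k i j * ((c j l : K))) = 0 := by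
      intro l
      have h1 : ∑ j, k i j * ((c j l : K)) = ∑ j, k i j * ((c l j : K)) :=
        Finset.sum_congr rfl fun j _ => by rw [hsym j l]
      rw [h1]
      exact (hZmem (c l)).1 (hc l) i
    rw [Finset.sum_congr rfl fun l _ => by rw [this l]]
    simp
  have hNmax : ∀ U' : Submodule ℚ (Fin n → ℚ), ratLinSet K V U' ⊆ L →
      ratLinSet K V U' ⊆ ratLinSet K V U₀ := by
    intro U' hU' x hx q hq
    by_cases hV : Subsingleton V
    · exact Subsingleton.elim _ _
    · have : Nontrivial V := not_subsingleton_iff_nontrivial.1 hV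
      obtain ⟨v, hv⟩ := exists_ne (0 : V)
      -- the orthogonal complement of U' consists of rational solution vectors
      have horth : (dotForm n).orthogonal U' ≤ Z := by
        intro p hp
        rw [hZmem]
        intro i
        have hy : (fun l => ((p l : K)) • v) ∈ ratLinSet K V U' := by
          intro q' hq'
          have hpq : ∑ t, q' t * p t = 0 := hp q' hq'
          have : ∑ t, ((q' t : K)) • (((p t : K)) • v)
              = (((∑ t, q' t * p t : ℚ) : K)) • v := by
            push_cast
            rw [Finset.sum_smul]
            exact Finset.sum_congr rfl fun t _ => (smul_smul _ _ _)
          rw [this, hpq]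
          simp
        have hyL := hU' hy
        rw [hL] at hyL
        have := hyL i
        have h2 : ∑ j, k i j • (((p j : K)) • v) = (∑ j, k i j * ((p j : K))) • v := by
          rw [Finset.sum_smul]
          exact Finset.sum_congr rfl fun j _ => (smul_smul _ _ _)
        rw [h2] at this
        rcases smul_eq_zero.1 this with h | h
        · exact h
        · exact absurd h hv
      -- decompose x with respect to the orthogonal complement of U'
      have hxkill : ∀ d ∈ (dotForm n).orthogonal ((dotForm n).orthogonal U'),
          ∑ t, ((d t : K)) • x t = 0 := by
        intro d hd
        rw [LinearMap.BilinForm.orthogonal_orthogonal (dotForm_nondeg n) (dotForm_refl n)] at hd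
        exact hx d hd
      obtain ⟨c, hc, hsym, hdec⟩ := key_decomp (K := K) ((dotForm n).orthogonal U') x hxkill
      rw [sum_smul_rewrite (fun t => ((q t : K))) c x hdec]
      have hin : ∀ l, (∑ j, ((q j : K)) * ((c j l : K))) = 0 := by
        intro l
        have h1 : ∑ j, ((q j : K)) * ((c j l : K)) = (((∑ j, c l j * q j : ℚ) : K)) := by
          push_cast
          exact Finset.sum_congr rfl fun j _ => by rw [hsym j l, mul_comm]
        rw [h1]
        have : ∑ j, c l j * q j = 0 := hq (c l) (horth (hc l))
        rw [this]
        simp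
      rw [Finset.sum_congr rfl fun l _ => by rw [hin l]]
      simp
  refine ⟨ratLinSet K V U₀, ⟨⟨U₀, rfl⟩, hNL, hNmax⟩, ?_⟩
  rintro N' ⟨⟨U'', rfl⟩, hN'L, hN'max⟩
  exact Set.Subset.antisymm (hNmax U'' hN'L) (hN'max U₀ hNL)
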